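/- In the strong coupling regime for the unidirectional three-node chain, i.e. for 0 < ν < 1 and β > 1/3 + ν, every equilibrium is fully synchronized: at any equilibrium one has f(x₃,ν) = 0 (so x₃ ∈ {−√ν, √ν, 1}) and moreover x₁ = x₂ = x₃; hence the chain has exactly three equilibria, (x*,x*,x*) for x* ∈ {−√ν, √ν, 1}. Conversely, for any β, every point (x,x,x) with f(x,ν) = 0 is an equilibrium. -/
import Mathlib


/-- The single-node vector field `f(x,ν) = -(x-1)(x²-ν)`. -/
noncomputable def f (ν x : ℝ) : ℝ := -((x - 1) * (x ^ 2 - ν))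

/-- `(x₁,x₂,x₃)` is an equilibrium of the unidirectionally coupled three-node chain
`ẋ₁ = f(x₁,ν) + β(x₂-x₁)`, `ẋ₂ = f(x₂,ν) + β(x₃-x₂)`, `ẋ₃ = f(x₃,ν)`. -/
def IsChainEquilibrium (ν β x₁ x₂ x₃ : ℝ) : Prop :=
  f ν x₁ + β * (x₂ - x₁) = 0 ∧ f ν x₂ + β * (x₃ - x₂) = 0 ∧ f ν x₃ = 0

lemma sync {ν β y c : ℝ} (hβ : 1 / 3 + ν < β)
    (h : f ν y + β * (c - y) = 0) (hc : f ν c = 0) : y = c := by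
  by_contra hne
  have hd : y - c ≠ 0 := sub_ne_zero.mpr hne
  unfold f at h hc
  have key : (y - c) * (β - (-(y ^ 2 + y * c + c ^ 2) + y + c + ν)) = 0 := by
    nlinarith [h, hc]
  have hβe : β = -(y ^ 2 + y * c + c ^ 2) + y + c + ν := by
    rcases mul_eq_zero.mp key with h' | h'
    · exact absurd h' hd
    · linarith
  nlinarith [sq_nonneg (y + c - 2/3), sq_nonneg (y - c)]

lemma froot {ν x : ℝ} (hν0 : 0 < ν) (h : f ν x = 0) :
    x = -Real.sqrt ν ∨ x = Real.sqrt ν ∨ x = 1 := by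
  have hs : Real.sqrt ν ^ 2 = ν := Real.sq_sqrt hν0.le
  unfold f at h
  have : (x - 1) * ((x - Real.sqrt ν) * (x + Real.sqrt ν)) = 0 := by
    linear_combination -h + (1 - x) * hs
  rcases mul_eq_zero.mp this with h1 | h2
  · right; right; linarith [sub_eq_zero.mp h1]
  · rcases mul_eq_zero.mp h2 with h3 | h4
    · right; left; linarith [sub_eq_zero.mp h3]
    · left; linarith [add_eq_zero_iff_eq_neg.mp h4]

lemma fsqrt {ν : ℝ} (hν0 : 0 < ν) : f ν (Real.sqrt ν) = 0 ∧ f ν (-Real.sqrt ν) = 0 := by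
  have hs : Real.sqrt ν ^ 2 = ν := Real.sq_sqrt hν0.le
  constructor <;> unfold f
  · linear_combination (1 - Real.sqrt ν) * hs
  · linear_combination (Real.sqrt ν + 1) * hs

/-- In the strong coupling regime `β > 1/3 + ν` (with `0 < ν < 1`), every
equilibrium of the three-node chain is fully synchronized: `f(x₃,ν) = 0` (so
`x₃ ∈ {-√ν, √ν, 1}`) and `x₁ = x₂ = x₃`; hence there are exactly the three
equilibria `(x*,x*,x*)` with `x* ∈ {-√ν, √ν, 1}`. Conversely, for any `β`, every
point `(x,x,x)` with `f(x,ν) = 0` is an equilibrium. -/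
theorem chain_strong_coupling_synchronized {ν : ℝ} (hν0 : 0 < ν) (hν1 : ν < 1) :
    (∀ β : ℝ, 1 / 3 + ν < β →
      (∀ x₁ x₂ x₃ : ℝ, IsChainEquilibrium ν β x₁ x₂ x₃ →
        (f ν x₃ = 0 ∧
          (x₃ = -Real.sqrt ν ∨ x₃ = Real.sqrt ν ∨ x₃ = 1) ∧
          x₁ = x₃ ∧ x₂ = x₃)) ∧
      {p : ℝ × ℝ × ℝ | IsChainEquilibrium ν β p.1 p.2.1 p.2.2} =
        {(-Real.sqrt ν, -Real.sqrt ν, -Real.sqrt ν),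
          (Real.sqrt ν, Real.sqrt ν, Real.sqrt ν), (1, 1, 1)}) ∧
    (∀ β x : ℝ, f ν x = 0 → IsChainEquilibrium ν β x x x) := by
  have conv : ∀ β x : ℝ, f ν x = 0 → IsChainEquilibrium ν β x x x := by
    intro β x hx
    refine ⟨?_, ?_, hx⟩ <;> simp [hx]
  have main : ∀ β : ℝ, 1 / 3 + ν < β →
      ∀ x₁ x₂ x₃ : ℝ, IsChainEquilibrium ν β x₁ x₂ x₃ →
        (f ν x₃ = 0 ∧
          (x₃ = -Real.sqrt ν ∨ x₃ = Real.sqrt ν ∨ x₃ = 1) ∧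
          x₁ = x₃ ∧ x₂ = x₃) := by
    intro β hβ x₁ x₂ x₃ ⟨h1, h2, h3⟩
    have e2 : x₂ = x₃ := sync hβ h2 h3
    have hf2 : f ν x₂ = 0 := e2 ▸ h3
    have e1 : x₁ = x₂ := sync hβ h1 hf2
    exact ⟨h3, froot hν0 h3, e1.trans e2, e2⟩
  refine ⟨fun β hβ => ⟨main β hβ, ?_⟩, conv⟩
  ext ⟨a, b, c⟩
  simp only [Set.mem_setOf_eq, Set.mem_insert_iff, Set.mem_singleton_iff, Prod.mk.injEq]
  constructor
  · intro h
    obtain ⟨h3, hr, e1, e2⟩ := main β hβ a b c h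
    rcases hr with h' | h' | h' <;> [left; (right; left); (right; right)] <;>
      exact ⟨e1.trans h', e2.trans h', h'⟩
  · rintro (⟨rfl, rfl, rfl⟩ | ⟨rfl, rfl, rfl⟩ | ⟨rfl, rfl, rfl⟩)
    · exact conv β _ (fsqrt hν0).2
    · exact conv β _ (fsqrt hν0).1
    · exact conv β 1 (by unfold f; ring)
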